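/- If a symmetric endomorphism A of an n-dimensional inner product space (n ≥ 2) has S₂(A) > 0 and S₁(A) > 0, then the Newton tensor P₁ = S₁·Id − A is positive definite. -/

import Mathlib

open Finset

open Matrix

lemma sq_sum_aux (n : ℕ) (f : Fin n → ℝ) :
    (∑ i, f i)^2 = ∑ i, (f i)^2 + 2 * ∑ p ∈ Finset.univ.filter (fun p : Fin n × Fin n => p.1 < p.2), f p.1 * f p.2 := by
  have h1 : (∑ i, f i)^2 = ∑ p : Fin n × Fin n, f p.1 * f p.2 := by
    rw [sq, Finset.sum_mul_sum, ← Finset.sum_product', Finset.univ_product_univ]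
  have h2 : ∑ p ∈ Finset.univ.filter (fun p : Fin n × Fin n => p.2 < p.1), f p.1 * f p.2
      = ∑ p ∈ Finset.univ.filter (fun p : Fin n × Fin n => p.1 < p.2), f p.1 * f p.2 := by
    apply Finset.sum_nbij' (fun p => Prod.swap p) (fun p => Prod.swap p)
    all_goals simp [mul_comm]
  have h3 := Finset.sum_filter_add_sum_filter_not Finset.univ
    (fun p : Fin n × Fin n => p.1 = p.2) (fun p => f p.1 * f p.2)
  have h4 := Finset.sum_filter_add_sum_filter_not
    (Finset.univ.filter (fun p : Fin n × Fin n => ¬ p.1 = p.2))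
    (fun p : Fin n × Fin n => p.1 < p.2) (fun p => f p.1 * f p.2)
  have e1 : (Finset.univ.filter (fun p : Fin n × Fin n => ¬ p.1 = p.2)).filter
      (fun p : Fin n × Fin n => p.1 < p.2) = Finset.univ.filter (fun p : Fin n × Fin n => p.1 < p.2) := by
    ext p
    simp only [Finset.mem_filter, Finset.mem_univ, true_and]
    exact ⟨fun h => h.2, fun h => ⟨ne_of_lt h, h⟩⟩
  have e2 : (Finset.univ.filter (fun p : Fin n × Fin n => ¬ p.1 = p.2)).filter
      (fun p : Fin n × Fin n => ¬ p.1 < p.2) = Finset.univ.filter (fun p : Fin n × Fin n => p.2 < p.1) := by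
    ext p
    simp only [Finset.mem_filter, Finset.mem_univ, true_and]
    constructor
    · rintro ⟨h1, h2⟩; exact lt_of_le_of_ne (not_lt.mp h2) (Ne.symm h1)
    · intro h; exact ⟨fun e => absurd e.symm (ne_of_lt h), not_lt.mpr h.le⟩
  have e3 : ∑ p ∈ Finset.univ.filter (fun p : Fin n × Fin n => p.1 = p.2), f p.1 * f p.2
      = ∑ i, (f i)^2 := by
    apply Finset.sum_nbij' (fun p => p.1) (fun i => (i, i))
    all_goals simp [sq]
  rw [e1, e2, h2] at h4
  rw [e3] at h3
  rw [h1, ← h3, ← h4]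
  ring

/-- if a symmetric endomorphism `A` of an n-dimensional inner product space
(`n ≥ 2`) has `S₂(A) > 0` and `S₁(A) > 0` (elementary symmetric functions of its
eigenvalues), then the Newton tensor `P₁ = S₁·Id − A` is positive definite. -/
theorem stmt_9 (n : ℕ) (hn : 2 ≤ n) (A : Matrix (Fin n) (Fin n) ℝ) (hA : A.IsHermitian)
    (S₁ S₂ : ℝ)
    (hS₁ : S₁ = ∑ i, hA.eigenvalues i)
    (hS₂ : S₂ = ∑ p ∈ Finset.univ.filter (fun p : Fin n × Fin n => p.1 < p.2),
      hA.eigenvalues p.1 * hA.eigenvalues p.2)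
    (hS₁pos : 0 < S₁) (hS₂pos : 0 < S₂) :
    (S₁ • (1 : Matrix (Fin n) (Fin n) ℝ) - A).PosDef := by
  have hev : ∀ i, 0 < S₁ - hA.eigenvalues i := by
    intro i
    have hid := sq_sum_aux n hA.eigenvalues
    rw [← hS₁, ← hS₂] at hid
    have h1 : hA.eigenvalues i ^ 2 ≤ ∑ j, hA.eigenvalues j ^ 2 :=
      Finset.single_le_sum (f := fun j => hA.eigenvalues j ^ 2) (fun j _ => sq_nonneg _) (Finset.mem_univ i)
    nlinarith [hS₁pos, hS₂pos]
  set U : Matrix (Fin n) (Fin n) ℝ := (hA.eigenvectorUnitary : Matrix (Fin n) (Fin n) ℝ) with hU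
  have hUU : U * star U = 1 := (Matrix.mem_unitaryGroup_iff).mp hA.eigenvectorUnitary.2
  have hB : S₁ • (1 : Matrix (Fin n) (Fin n) ℝ) - A =
      U * Matrix.diagonal (fun i => S₁ - hA.eigenvalues i) * star U := by
    conv_lhs => rw [hA.spectral_theorem]
    have h1 : S₁ • (1 : Matrix (Fin n) (Fin n) ℝ) = U * (S₁ • (1 : Matrix (Fin n) (Fin n) ℝ)) * star U := by
      rw [mul_smul_comm, smul_mul_assoc, Matrix.mul_one, hUU]
    rw [h1, Unitary.conjStarAlgAut_apply, ← hU, ← Matrix.sub_mul, ← Matrix.mul_sub]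
    congr 1
    congr 1
    ext i j
    by_cases h : i = j <;>
      simp [Matrix.diagonal, Matrix.one_apply, h]
  rw [hB]
  have hD : (Matrix.diagonal (fun i => S₁ - hA.eigenvalues i)).PosDef := .diagonal hev
  rw [Matrix.posDef_iff_dotProduct_mulVec]
  constructor
  · rw [Matrix.star_eq_conjTranspose]
    exact Matrix.isHermitian_mul_mul_conjTranspose U hD.1
  · intro x hx
    have hy : star U *ᵥ x ≠ 0 := by
      intro h
      apply hx
      have : (U * star U) *ᵥ x = U *ᵥ (star U *ᵥ x) := by rw [Matrix.mulVec_mulVec]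
      rw [hUU, Matrix.one_mulVec] at this
      rw [this, h, Matrix.mulVec_zero]
    have key : dotProduct (star x) ((U * Matrix.diagonal (fun i => S₁ - hA.eigenvalues i) * star U) *ᵥ x)
        = dotProduct (star (star U *ᵥ x)) (Matrix.diagonal (fun i => S₁ - hA.eigenvalues i) *ᵥ (star U *ᵥ x)) := by
      rw [Matrix.star_mulVec, ← Matrix.mulVec_mulVec, ← Matrix.mulVec_mulVec,
        Matrix.dotProduct_mulVec, Matrix.star_eq_conjTranspose, Matrix.conjTranspose_conjTranspose]
    rw [key]
    exact (Matrix.posDef_iff_dotProduct_mulVec.mp hD).2 hy
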